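/- arXiv:2505.24657 — 2 statements merged into one kernel-verified Lean document; each statement's English description precedes it below -/
import Mathlib

section
/- Let (X,d) be a compact metric space and let (X, f_{1,∞}) be a non-autonomous discrete system such that f_{1,∞} is feeble open, each f_n is surjective, (f_n) converges uniformly to a continuous map f : X → X, and the compositions (f_r^k) converge collectively to (f^k). If f_{1,∞} is syndetically transitive and weakly mixing, then f_{1,∞} is multi-transitive. -/
open Set Filter

/-- `nds f i n` is the `n`-step composition `f_i^n = f (i+n-1) ∘ ⋯ ∘ f i`, with `nds f i 0 = id`. -/
def nds {X : Type*} (f : ℕ → X → X) (i : ℕ) : ℕ → X → X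
  | 0 => id
  | n + 1 => f (i + n) ∘ nds f i n

section TopDefs

variable {X : Type*} [TopologicalSpace X]

/-- The NDS `f_{1,∞}` is (topologically) transitive. -/
def NDSTransitive (f : ℕ → X → X) : Prop :=
  ∀ U V : Set X, IsOpen U → U.Nonempty → IsOpen V → V.Nonempty →
    ∃ n : ℕ, 0 < n ∧ (nds f 1 n '' U ∩ V).Nonempty

/-- The NDS `f_{1,∞}` is mixing. -/
def NDSMixing (f : ℕ → X → X) : Prop :=
  ∀ U V : Set X, IsOpen U → U.Nonempty → IsOpen V → V.Nonempty →
    ∃ N : ℕ, ∀ n : ℕ, N ≤ n → (nds f 1 n '' U ∩ V).Nonempty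

/-- The NDS `f_{1,∞}` is weakly mixing. -/
def NDSWeaklyMixing (f : ℕ → X → X) : Prop :=
  ∀ U₁ U₂ V₁ V₂ : Set X, IsOpen U₁ → U₁.Nonempty → IsOpen U₂ → U₂.Nonempty →
    IsOpen V₁ → V₁.Nonempty → IsOpen V₂ → V₂.Nonempty →
    ∃ n : ℕ, 0 < n ∧ (nds f 1 n '' U₁ ∩ V₁).Nonempty ∧ (nds f 1 n '' U₂ ∩ V₂).Nonempty

/-- The NDS `f_{1,∞}` is multi-transitive. -/
def NDSMultiTransitive (f : ℕ → X → X) : Prop :=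
  ∀ m : ℕ, 0 < m → ∀ U V : Fin m → Set X,
    (∀ j, IsOpen (U j)) → (∀ j, (U j).Nonempty) →
    (∀ j, IsOpen (V j)) → (∀ j, (V j).Nonempty) →
    ∃ l : ℕ, 0 < l ∧ ∀ j : Fin m, (nds f 1 (l * (j.1 + 1)) '' U j ∩ V j).Nonempty

/-- The NDS `f_{1,∞}` is totally transitive. -/
def NDSTotallyTransitive (f : ℕ → X → X) : Prop :=
  ∀ k : ℕ, 0 < k → ∀ U V : Set X, IsOpen U → U.Nonempty → IsOpen V → V.Nonempty →
    ∃ n : ℕ, 0 < n ∧ (nds f 1 (n * k) '' U ∩ V).Nonempty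

/-- The NDS `f_{1,∞}` is minimal: every orbit is dense. -/
def NDSMinimal (f : ℕ → X → X) : Prop :=
  ∀ x : X, Dense (Set.range fun n : ℕ => nds f 1 n x)

/-- The NDS `f_{1,∞}` is feeble open. -/
def FeebleOpen (f : ℕ → X → X) : Prop :=
  ∀ i : ℕ, 1 ≤ i → ∀ U : Set X, IsOpen U → U.Nonempty → (interior (f i '' U)).Nonempty

/-- A set of positive integers is syndetic (has bounded gaps). -/
def SyndeticSet (A : Set ℕ) : Prop :=
  ∃ M : ℕ, ∀ i : ℕ, 1 ≤ i → ∃ j ∈ A, i ≤ j ∧ j ≤ i + M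

/-- A set of positive integers is thick (contains arbitrarily long runs). -/
def ThickSet (A : Set ℕ) : Prop :=
  ∀ p : ℕ, ∃ n : ℕ, ∀ j : ℕ, n ≤ j → j ≤ n + p → j ∈ A

/-- The NDS `f_{1,∞}` is syndetically transitive. -/
def NDSSyndeticallyTransitive (f : ℕ → X → X) : Prop :=
  ∀ U V : Set X, IsOpen U → U.Nonempty → IsOpen V → V.Nonempty →
    SyndeticSet {n : ℕ | 0 < n ∧ (nds f 1 n '' U ∩ V).Nonempty}

/-- The NDS `f_{1,∞}` has dense periodic points. -/
def NDSDensePeriodicPoints (f : ℕ → X → X) : Prop :=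
  Dense {x : X | ∃ k : ℕ, 0 < k ∧ ∀ n : ℕ, 0 < n → nds f 1 (k * n) x = x}

/-- The NDS `f_{k,∞}` is strongly transitive. -/
def NDSStronglyTransitiveFrom (f : ℕ → X → X) (k : ℕ) : Prop :=
  ∀ U : Set X, IsOpen U → U.Nonempty →
    ∃ M : ℕ, 0 < M ∧ (⋃ i ∈ Set.Icc 1 M, nds f k i '' U) = Set.univ

/-- An autonomous map is transitive. -/
def MapTransitive {Y : Type*} [TopologicalSpace Y] (g : Y → Y) : Prop :=
  ∀ U V : Set Y, IsOpen U → U.Nonempty → IsOpen V → V.Nonempty →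
    ∃ n : ℕ, 0 < n ∧ (g^[n] '' U ∩ V).Nonempty

/-- An autonomous map is weakly mixing. -/
def MapWeaklyMixing {Y : Type*} [TopologicalSpace Y] (g : Y → Y) : Prop :=
  ∀ U₁ U₂ V₁ V₂ : Set Y, IsOpen U₁ → U₁.Nonempty → IsOpen U₂ → U₂.Nonempty →
    IsOpen V₁ → V₁.Nonempty → IsOpen V₂ → V₂.Nonempty →
    ∃ n : ℕ, 0 < n ∧ (g^[n] '' U₁ ∩ V₁).Nonempty ∧ (g^[n] '' U₂ ∩ V₂).Nonempty

/-- An autonomous map is totally transitive. -/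
def MapTotallyTransitive {Y : Type*} [TopologicalSpace Y] (g : Y → Y) : Prop :=
  ∀ k : ℕ, 0 < k → ∀ U V : Set Y, IsOpen U → U.Nonempty → IsOpen V → V.Nonempty →
    ∃ n : ℕ, 0 < n ∧ (g^[n * k] '' U ∩ V).Nonempty

/-- An autonomous map is syndetically transitive. -/
def MapSyndeticallyTransitive {Y : Type*} [TopologicalSpace Y] (g : Y → Y) : Prop :=
  ∀ U V : Set Y, IsOpen U → U.Nonempty → IsOpen V → V.Nonempty →
    SyndeticSet {n : ℕ | 0 < n ∧ (g^[n] '' U ∩ V).Nonempty}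

/-- An autonomous map is minimal. -/
def MapMinimal {Y : Type*} [TopologicalSpace Y] (g : Y → Y) : Prop :=
  ∀ x : Y, Dense (Set.range fun n : ℕ => g^[n] x)

end TopDefs

section MetricDefs

variable {X : Type*} [MetricSpace X]

/-- The compositions `(f_r^k)` converge collectively to `(f^k)` (w.r.t. the supremum metric). -/
def CollectivelyConverges (f : ℕ → X → X) (g : X → X) : Prop :=
  ∀ ε : ℝ, 0 < ε → ∃ r₀ : ℕ, ∀ r : ℕ, r₀ ≤ r → ∀ k : ℕ, 1 ≤ k → ∀ x : X,
    dist (nds f r k x) (g^[k] x) < ε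

/-- `N(U, δ)`: the times at which the NDS is `δ`-sensitive on `U`. -/
def SensSet (f : ℕ → X → X) (U : Set X) (δ : ℝ) : Set ℕ :=
  {n : ℕ | 0 < n ∧ ∃ x ∈ U, ∃ y ∈ U, δ < dist (nds f 1 n x) (nds f 1 n y)}

/-- The NDS `f_{1,∞}` is multi-sensitive. -/
def NDSMultiSensitive (f : ℕ → X → X) : Prop :=
  ∃ δ : ℝ, 0 < δ ∧ ∀ m : ℕ, 0 < m → ∀ U : Fin m → Set X,
    (∀ i, IsOpen (U i)) → (∀ i, (U i).Nonempty) → (⋂ i, SensSet f (U i) δ).Nonempty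

/-- The NDS `f_{1,∞}` is thickly sensitive. -/
def NDSThicklySensitive (f : ℕ → X → X) : Prop :=
  ∃ δ : ℝ, 0 < δ ∧ ∀ U : Set X, IsOpen U → U.Nonempty → ThickSet (SensSet f U δ)

/-- The NDS `f_{1,∞}` is syndetically sensitive. -/
def NDSSyndeticallySensitive (f : ℕ → X → X) : Prop :=
  ∃ δ : ℝ, 0 < δ ∧ ∀ U : Set X, IsOpen U → U.Nonempty → SyndeticSet (SensSet f U δ)

/-- The NDS `f_{1,∞}` is mildly mixing: its product with every transitive NDS on a compact
metric space is transitive. -/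
def NDSMildlyMixing (f : ℕ → X → X) : Prop :=
  ∀ (Y : Type*) [MetricSpace Y] [CompactSpace Y] (g : ℕ → Y → Y),
    (∀ n : ℕ, 1 ≤ n → Continuous (g n)) → NDSTransitive g →
    NDSTransitive (fun n (p : X × Y) => (f n p.1, g n p.2))

/-- The NDS `f_{1,∞}` is Li–Yorke chaotic. -/
def LiYorkeChaotic (f : ℕ → X → X) : Prop :=
  ∃ S : Set X, ¬S.Countable ∧ ∀ x ∈ S, ∀ y ∈ S, x ≠ y →
    Filter.liminf (fun n : ℕ => dist (nds f 1 n x) (nds f 1 n y)) Filter.atTop = 0 ∧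
    0 < Filter.limsup (fun n : ℕ => dist (nds f 1 n x) (nds f 1 n y)) Filter.atTop

end MetricDefs

section AuxBasic

lemma nds_succ' {X : Type*} (f : ℕ → X → X) (i n : ℕ) :
    nds f i (n + 1) = f (i + n) ∘ nds f i n := rfl

lemma nds_continuous {X : Type*} [TopologicalSpace X] (f : ℕ → X → X)
    (hcont : ∀ n : ℕ, 1 ≤ n → Continuous (f n)) {i : ℕ} (hi : 1 ≤ i) :
    ∀ n, Continuous (nds f i n)
  | 0 => continuous_id
  | (n + 1) => (hcont (i + n) (by omega)).comp (nds_continuous f hcont hi n)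

lemma nds_surjective {X : Type*} (f : ℕ → X → X)
    (hsurj : ∀ n : ℕ, 1 ≤ n → Function.Surjective (f n)) {i : ℕ} (hi : 1 ≤ i) :
    ∀ n, Function.Surjective (nds f i n)
  | 0 => Function.surjective_id
  | (n + 1) => (hsurj (i + n) (by omega)).comp (nds_surjective f hsurj hi n)

lemma nds_add {X : Type*} (f : ℕ → X → X) (i a : ℕ) :
    ∀ b, nds f i (a + b) = nds f (i + a) b ∘ nds f i a
  | 0 => rfl
  | (b + 1) => by
      show nds f i ((a + b) + 1) = _
      rw [nds_succ', nds_add f i a b, nds_succ']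
      ext x
      simp [Function.comp, Nat.add_assoc]

lemma feeble_chain {X : Type*} [TopologicalSpace X] (f : ℕ → X → X) (hfo : FeebleOpen f) :
    ∀ (c : ℕ) (U : Set X), IsOpen U → U.Nonempty →
      ∃ W : Set X, IsOpen W ∧ W.Nonempty ∧ W ⊆ nds f 1 c '' U
  | 0, U, hU, hUne => ⟨U, hU, hUne, by simp [nds]⟩
  | (c + 1), U, hU, hUne => by
      obtain ⟨W, hWo, hWne, hWsub⟩ := feeble_chain f hfo c U hU hUne
      refine ⟨interior (f (1 + c) '' W), isOpen_interior,
        hfo (1 + c) (by omega) W hWo hWne, ?_⟩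
      refine interior_subset.trans ?_
      rw [nds_succ', Set.image_comp]
      exact Set.image_mono hWsub

lemma SyndeticSet.mono {A B : Set ℕ} (h : A ⊆ B) (hA : SyndeticSet A) : SyndeticSet B := by
  obtain ⟨M, hM⟩ := hA
  exact ⟨M, fun i hi => by obtain ⟨j, hj, h1, h2⟩ := hM i hi; exact ⟨j, h hj, h1, h2⟩⟩

/-- Thickly syndetic set of naturals. -/
def ThicklySyndetic (A : Set ℕ) : Prop :=
  ∀ p : ℕ, SyndeticSet {n | ∀ i ≤ p, n + i ∈ A}

lemma ThicklySyndetic.syndetic {A : Set ℕ} (h : ThicklySyndetic A) : SyndeticSet A :=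
  SyndeticSet.mono (fun n hn => by simpa using hn 0 (le_refl 0)) (h 0)

lemma ThicklySyndetic.inter {A B : Set ℕ} (hA : ThicklySyndetic A) (hB : ThicklySyndetic B) :
    ThicklySyndetic (A ∩ B) := by
  intro p
  obtain ⟨MA, hMA⟩ := hA p
  obtain ⟨MB, hMB⟩ := hB (p + MA)
  refine ⟨MA + MB, fun i hi => ?_⟩
  obtain ⟨n, hn, hin, hni⟩ := hMB i hi
  obtain ⟨n', hn', h1, h2⟩ := hMA n (le_trans hi hin)
  refine ⟨n', fun j hj => ⟨hn' j hj, ?_⟩, by omega, by omega⟩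
  have he : n' + j = n + ((n' - n) + j) := by omega
  rw [he]
  exact hn _ (by omega)

lemma ThicklySyndetic.dilate {A : Set ℕ} (hA : ThicklySyndetic A) (q c : ℕ) (hq : 1 ≤ q) :
    ThicklySyndetic {l | c + 1 ≤ q * l ∧ q * l - c ∈ A} := by
  intro p
  obtain ⟨M, hM⟩ := hA (q * (p + 1))
  refine ⟨M + c + q, fun i hi => ?_⟩
  obtain ⟨n, hn, h1, h2⟩ := hM (q * i) (by nlinarith)
  set l₀ := (n + c) / q + 1 with hl₀
  have hdm := Nat.div_add_mod (n + c) q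
  have hmod : (n + c) % q < q := Nat.mod_lt _ (by omega)
  have hql₀ : q * l₀ = q * ((n + c) / q) + q := by rw [hl₀]; ring
  have hlow : n + c < q * l₀ := by omega
  have hhigh : q * l₀ ≤ n + c + q := by omega
  refine ⟨l₀, fun j hj => ?_, ?_, ?_⟩
  · have e1 : q * (l₀ + j) = q * l₀ + q * j := by ring
    have e2 : q * j ≤ q * p := Nat.mul_le_mul_left q hj
    have e0 : q * (p + 1) = q * p + q := by ring
    constructor
    · omega
    · have e3 : q * (l₀ + j) - c = n + (q * (l₀ + j) - c - n) := by omega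
      rw [e3]
      exact hn _ (by omega)
  · have : q * i < q * l₀ := by omega
    have := Nat.lt_of_mul_lt_mul_left this
    omega
  · have e4 : M + c + q ≤ q * (M + c + q) := Nat.le_mul_of_pos_left _ (by omega)
    have e5 : q * l₀ ≤ q * (i + (M + c + q)) := by
      have : q * (i + (M + c + q)) = q * i + q * (M + c + q) := by ring
      omega
    exact Nat.le_of_mul_le_mul_left e5 (by omega)

lemma ThicklySyndetic.iInter_fin :
    ∀ (m : ℕ) (C : Fin m → Set ℕ), (∀ j, ThicklySyndetic (C j)) →
      ThicklySyndetic (⋂ j, C j)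
  | 0, C, _ => by
      intro p
      refine ⟨0, fun i hi => ⟨i, ?_, le_refl i, by omega⟩⟩
      intro j hj
      simp
  | (m + 1), C, hC => by
      have hrest := ThicklySyndetic.iInter_fin m (fun j => C j.succ) (fun j => hC _)
      have he : (⋂ j, C j) = C 0 ∩ ⋂ j : Fin m, C j.succ := by
        ext n
        simp [Fin.forall_fin_succ]
      rw [he]
      exact (hC 0).inter hrest

end AuxBasic

section AuxMap

variable {Y : Type*} [TopologicalSpace Y]

lemma furstenberg_pair {G : Y → Y} (hG : Continuous G) (hwm : MapWeaklyMixing G)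
    {U₁ V₁ U₂ V₂ : Set Y} (hU₁ : IsOpen U₁) (hU₁n : U₁.Nonempty)
    (hV₁ : IsOpen V₁) (hV₁n : V₁.Nonempty) (hU₂ : IsOpen U₂) (hU₂n : U₂.Nonempty)
    (hV₂ : IsOpen V₂) (hV₂n : V₂.Nonempty) :
    ∃ U₃ V₃ : Set Y, IsOpen U₃ ∧ U₃.Nonempty ∧ IsOpen V₃ ∧ V₃.Nonempty ∧
      ∀ m, (G^[m] '' U₃ ∩ V₃).Nonempty →
        (G^[m] '' U₁ ∩ V₁).Nonempty ∧ (G^[m] '' U₂ ∩ V₂).Nonempty := by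
  obtain ⟨n, -, h1, h2⟩ := hwm U₁ V₁ U₂ V₂ hU₁ hU₁n hV₁ hV₁n hU₂ hU₂n hV₂ hV₂n
  obtain ⟨z₁, ⟨x, hxU₁, rfl⟩, hxU₂⟩ := h1
  obtain ⟨z₂, ⟨y, hyV₁, rfl⟩, hyV₂⟩ := h2
  refine ⟨U₁ ∩ G^[n] ⁻¹' U₂, V₁ ∩ G^[n] ⁻¹' V₂,
    hU₁.inter ((hU₂.preimage (hG.iterate n))), ⟨x, hxU₁, hxU₂⟩,
    hV₁.inter ((hV₂.preimage (hG.iterate n))), ⟨y, hyV₁, hyV₂⟩, ?_⟩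
  rintro m ⟨z, ⟨w, ⟨hwU₁, hwU₂⟩, rfl⟩, hzV₁, hzV₂⟩
  constructor
  · exact ⟨G^[m] w, ⟨w, hwU₁, rfl⟩, hzV₁⟩
  · refine ⟨G^[m] (G^[n] w), ⟨G^[n] w, hwU₂, rfl⟩, ?_⟩
    have he : G^[m] (G^[n] w) = G^[n] (G^[m] w) := by
      rw [← Function.iterate_add_apply, ← Function.iterate_add_apply, Nat.add_comm]
    rw [he]
    exact hzV₂

lemma furstenberg_fin [Nonempty Y] {G : Y → Y} (hG : Continuous G) (hwm : MapWeaklyMixing G) :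
    ∀ (k : ℕ) (P Q : Fin k → Set Y), (∀ i, IsOpen (P i)) → (∀ i, (P i).Nonempty) →
      (∀ i, IsOpen (Q i)) → (∀ i, (Q i).Nonempty) →
      ∃ U V : Set Y, IsOpen U ∧ U.Nonempty ∧ IsOpen V ∧ V.Nonempty ∧
        ∀ n, (G^[n] '' U ∩ V).Nonempty → ∀ i, (G^[n] '' P i ∩ Q i).Nonempty
  | 0, P, Q, _, _, _, _ =>
      ⟨Set.univ, Set.univ, isOpen_univ, Set.univ_nonempty, isOpen_univ, Set.univ_nonempty,
        fun n _ i => i.elim0⟩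
  | (k + 1), P, Q, hP, hPn, hQ, hQn => by
      obtain ⟨U', V', hU', hU'n, hV', hV'n, hsub⟩ :=
        furstenberg_fin hG hwm k (fun i => P i.succ) (fun i => Q i.succ)
          (fun i => hP _) (fun i => hPn _) (fun i => hQ _) (fun i => hQn _)
      obtain ⟨U, V, hU, hUn, hV, hVn, hsub2⟩ :=
        furstenberg_pair hG hwm (hP 0) (hPn 0) (hQ 0) (hQn 0) hU' hU'n hV' hV'n
      refine ⟨U, V, hU, hUn, hV, hVn, fun n hn i => ?_⟩
      obtain ⟨h0, hrest⟩ := hsub2 n hn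
      induction i using Fin.cases with
      | zero => exact h0
      | succ i => exact hsub n hrest i

lemma thicklySyndetic_N {G : Y → Y} (hG : Continuous G)
    (hGsurj : Function.Surjective G) (hwm : MapWeaklyMixing G)
    (hsyn : MapSyndeticallyTransitive G) {U V : Set Y} (hU : IsOpen U) (hUn : U.Nonempty)
    (hV : IsOpen V) (hVn : V.Nonempty) :
    ThicklySyndetic {n | 0 < n ∧ (G^[n] '' U ∩ V).Nonempty} := by
  intro p
  have : Nonempty Y := ⟨hUn.some⟩
  obtain ⟨U', V', hU', hU'n, hV', hV'n, hsub⟩ :=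
    furstenberg_fin hG hwm (p + 1) (fun _ => U) (fun i => G^[(i : ℕ)] ⁻¹' V)
      (fun _ => hU) (fun _ => hUn)
      (fun i => hV.preimage (hG.iterate _))
      (fun i => by
        obtain ⟨v, hv⟩ := hVn
        obtain ⟨x, hx⟩ := (hGsurj.iterate (i : ℕ)) v
        exact ⟨x, by simp [Set.mem_preimage, hx, hv]⟩)
  refine SyndeticSet.mono ?_ (hsyn U' V' hU' hU'n hV' hV'n)
  rintro n ⟨hn, hne⟩ i hip
  have := hsub n hne ⟨i, by omega⟩
  obtain ⟨z, ⟨x, hxU, rfl⟩, hzV⟩ := this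
  refine ⟨by omega, ⟨G^[n + i] x, ⟨x, hxU, rfl⟩, ?_⟩⟩
  have he : G^[n + i] x = G^[i] (G^[n] x) := by
    rw [Nat.add_comm, Function.iterate_add_apply]
  rw [he]
  exact hzV

end AuxMap

section AuxNDS

variable {X : Type*} [MetricSpace X]

lemma nds_wm_large {f : ℕ → X → X}
    (hcont : ∀ n : ℕ, 1 ≤ n → Continuous (f n)) (hwm : NDSWeaklyMixing f)
    (U₁ V₁ U₂ V₂ : Set X) (hU₁ : IsOpen U₁) (hU₁n : U₁.Nonempty)
    (hV₁ : IsOpen V₁) (hV₁n : V₁.Nonempty) (hU₂ : IsOpen U₂) (hU₂n : U₂.Nonempty)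
    (hV₂ : IsOpen V₂) (hV₂n : V₂.Nonempty) (N : ℕ) :
    ∃ n, N < n ∧ (nds f 1 n '' U₁ ∩ V₁).Nonempty ∧ (nds f 1 n '' U₂ ∩ V₂).Nonempty := by
  have hndsc : ∀ n, Continuous (nds f 1 n) := nds_continuous f hcont (le_refl 1)
  rcases subsingleton_or_nontrivial X with hss | hnt
  · obtain ⟨x₁, hx₁⟩ := hU₁n
    obtain ⟨v₁, hv₁⟩ := hV₁n
    obtain ⟨x₂, hx₂⟩ := hU₂n
    obtain ⟨v₂, hv₂⟩ := hV₂n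
    exact ⟨N + 1, by omega,
      ⟨v₁, ⟨x₁, hx₁, Subsingleton.elim _ _⟩, hv₁⟩,
      ⟨v₂, ⟨x₂, hx₂, Subsingleton.elim _ _⟩, hv₂⟩⟩
  · -- no isolated points
    have hni : ∀ p : X, ¬ IsOpen ({p} : Set X) := by
      intro p hp
      obtain ⟨q, hq⟩ := exists_ne p
      obtain ⟨n, -, h1, h2⟩ := hwm {p} {p} {p} ({p}ᶜ) hp ⟨p, rfl⟩ hp ⟨p, rfl⟩
        hp ⟨p, rfl⟩ (isClosed_singleton.isOpen_compl) ⟨q, hq⟩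
      obtain ⟨z, hz1, hz2⟩ := h1
      obtain ⟨z', hz'1, hz'2⟩ := h2
      rw [Set.image_singleton] at hz1 hz'1
      rw [Set.mem_singleton_iff] at hz1 hz'1 hz2
      exact hz'2 (by rw [hz'1, ← hz1, hz2]; rfl)
    have hdiff : ∀ (V : Set X), IsOpen V → V.Nonempty → ∀ T : Set X, T.Finite →
        (V \ T).Nonempty := by
      intro V hV hVn T hT
      obtain ⟨v, hv⟩ := hVn
      by_contra h
      rw [Set.not_nonempty_iff_eq_empty, Set.diff_eq_empty] at h
      have hVfin : V.Finite := hT.subset h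
      have hsing : IsOpen ({v} : Set X) := by
        have he : ({v} : Set X) = V ∩ (V \ {v})ᶜ := by
          ext x
          simp only [Set.mem_singleton_iff, Set.mem_inter_iff, Set.mem_compl_iff,
            Set.mem_diff, not_and, not_not]
          constructor
          · rintro rfl; exact ⟨hv, fun _ => rfl⟩
          · rintro ⟨hxV, hx⟩; exact hx hxV
        rw [he]
        exact hV.inter ((hVfin.diff).isClosed.isOpen_compl)
      exact hni v hsing
    obtain ⟨x₁, hx₁⟩ := hU₁n
    obtain ⟨x₂, hx₂⟩ := hU₂n
    have hfin₁ : ((fun n => nds f 1 n x₁) '' Set.Icc 1 (N + 1)).Finite :=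
      (Set.finite_Icc _ _).image _
    have hfin₂ : ((fun n => nds f 1 n x₂) '' Set.Icc 1 (N + 1)).Finite :=
      (Set.finite_Icc _ _).image _
    obtain ⟨v₁, hv₁V, hv₁T⟩ := hdiff V₁ hV₁ hV₁n _ hfin₁
    obtain ⟨v₂, hv₂V, hv₂T⟩ := hdiff V₂ hV₂ hV₂n _ hfin₂
    have hsne : (Finset.Icc 1 (N + 1)).Nonempty := by
      rw [Finset.nonempty_Icc]; omega
    have hrho : ∀ (v : X) (x : X), v ∉ ((fun n => nds f 1 n x) '' Set.Icc 1 (N + 1)) →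
        ∃ ρ > 0, ∀ n, 1 ≤ n → n ≤ N + 1 → 2 * ρ ≤ dist v (nds f 1 n x) := by
      intro v x hvT
      obtain ⟨b, hb, hmin⟩ := Finset.exists_min_image (Finset.Icc 1 (N + 1))
        (fun n => dist v (nds f 1 n x)) hsne
      refine ⟨dist v (nds f 1 b x) / 2, ?_, ?_⟩
      · have hpos : 0 < dist v (nds f 1 b x) := by
          rw [dist_pos]
          intro hcontra
          exact hvT ⟨b, by simpa using hb, hcontra.symm⟩
        linarith
      · intro n h1 h2
        have := hmin n (by rw [Finset.mem_Icc]; omega)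
        linarith
    obtain ⟨ρ₁, hρ₁, hρ₁d⟩ := hrho v₁ x₁ hv₁T
    obtain ⟨ρ₂, hρ₂, hρ₂d⟩ := hrho v₂ x₂ hv₂T
    set U₁' := U₁ ∩ ⋂ n : Fin (N + 2), (nds f 1 (n : ℕ)) ⁻¹' Metric.ball (nds f 1 (n : ℕ) x₁) ρ₁ with hU₁'def
    set U₂' := U₂ ∩ ⋂ n : Fin (N + 2), (nds f 1 (n : ℕ)) ⁻¹' Metric.ball (nds f 1 (n : ℕ) x₂) ρ₂ with hU₂'def
    have hU₁'o : IsOpen U₁' :=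
      hU₁.inter (isOpen_iInter_of_finite fun n => Metric.isOpen_ball.preimage (hndsc _))
    have hU₂'o : IsOpen U₂' :=
      hU₂.inter (isOpen_iInter_of_finite fun n => Metric.isOpen_ball.preimage (hndsc _))
    have hU₁'n : U₁'.Nonempty :=
      ⟨x₁, hx₁, Set.mem_iInter.2 fun n => by simp [Metric.mem_ball, hρ₁]⟩
    have hU₂'n : U₂'.Nonempty :=
      ⟨x₂, hx₂, Set.mem_iInter.2 fun n => by simp [Metric.mem_ball, hρ₂]⟩
    obtain ⟨n, hn0, hh1, hh2⟩ := hwm U₁' U₂' (V₁ ∩ Metric.ball v₁ ρ₁) (V₂ ∩ Metric.ball v₂ ρ₂)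
      hU₁'o hU₁'n hU₂'o hU₂'n (hV₁.inter Metric.isOpen_ball)
      ⟨v₁, hv₁V, by simp [Metric.mem_ball, hρ₁]⟩ (hV₂.inter Metric.isOpen_ball)
      ⟨v₂, hv₂V, by simp [Metric.mem_ball, hρ₂]⟩
    obtain ⟨z₁, ⟨w₁, hw₁, rfl⟩, hz₁V, hz₁b⟩ := hh1
    obtain ⟨z₂, ⟨w₂, hw₂, rfl⟩, hz₂V, hz₂b⟩ := hh2
    have hnN : N + 1 < n := by
      by_contra hle
      push_neg at hle
      have hmem := Set.mem_iInter.1 hw₁.2 ⟨n, by omega⟩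
      simp only [Set.mem_preimage, Metric.mem_ball] at hmem
      rw [Metric.mem_ball] at hz₁b
      have htri := dist_triangle v₁ (nds f 1 n w₁) (nds f 1 n x₁)
      have hkey := hρ₁d n (by omega) hle
      rw [dist_comm] at hz₁b
      linarith
    exact ⟨n, by omega, ⟨nds f 1 n w₁, ⟨w₁, hw₁.1, rfl⟩, hz₁V⟩,
      ⟨nds f 1 n w₂, ⟨w₂, hw₂.1, rfl⟩, hz₂V⟩⟩

end AuxNDS

section AuxF

variable {X : Type*} [MetricSpace X]

omit [MetricSpace X] in
lemma nds_one (f : ℕ → X → X) (r : ℕ) (x : X) : nds f r 1 x = f r x := by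
  show f (r + 0) (nds f r 0 x) = f r x
  rfl

lemma F_surjective [CompactSpace X] {f : ℕ → X → X} {F : X → X}
    (hsurj : ∀ n : ℕ, 1 ≤ n → Function.Surjective (f n)) (hF : Continuous F)
    (hcoll : CollectivelyConverges f F) : Function.Surjective F := by
  have hd : Dense (Set.range F) := by
    rw [Metric.dense_iff]
    intro z ε hε
    obtain ⟨r₀, hr₀⟩ := hcoll ε hε
    set r := max r₀ 1 with hr
    obtain ⟨x, hx⟩ := hsurj r (le_max_right _ _) z
    have hd := hr₀ r (le_max_left _ _) 1 (le_refl 1) x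
    rw [nds_one, hx] at hd
    refine ⟨F x, ?_, Set.mem_range_self x⟩
    rw [Metric.mem_ball]
    simpa [dist_comm] using hd
  have hclosed : IsClosed (Set.range F) := (isCompact_range hF).isClosed
  have huniv : Set.range F = Set.univ := by
    rw [← hclosed.closure_eq, hd.closure_eq]
  intro y
  have : y ∈ Set.range F := by rw [huniv]; trivial
  exact this

lemma F_weaklyMixing {f : ℕ → X → X} {F : X → X}
    (hcont : ∀ n : ℕ, 1 ≤ n → Continuous (f n))
    (hsurj : ∀ n : ℕ, 1 ≤ n → Function.Surjective (f n))
    (hcoll : CollectivelyConverges f F) (hwm : NDSWeaklyMixing f) :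
    MapWeaklyMixing F := by
  intro U₁ U₂ V₁ V₂ hU₁ hU₁n hU₂ hU₂n hV₁ hV₁n hV₂ hV₂n
  obtain ⟨v₁, hv₁⟩ := hV₁n
  obtain ⟨v₂, hv₂⟩ := hV₂n
  obtain ⟨e₁, he₁, hball₁⟩ := Metric.isOpen_iff.1 hV₁ v₁ hv₁
  obtain ⟨e₂, he₂, hball₂⟩ := Metric.isOpen_iff.1 hV₂ v₂ hv₂
  set ε := min (e₁ / 2) (e₂ / 2) with hε
  have hεpos : 0 < ε := by apply lt_min <;> linarith
  obtain ⟨r₀, hr₀⟩ := hcoll ε hεpos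
  set r := max r₀ 1 with hr
  have hr1 : 1 ≤ r := le_max_right _ _
  set c := r - 1 with hc
  have h1c : 1 + c = r := by omega
  have hpre : ∀ (U : Set X), IsOpen U → U.Nonempty →
      IsOpen ((nds f 1 c) ⁻¹' U) ∧ ((nds f 1 c) ⁻¹' U).Nonempty := by
    intro U hU hUn
    obtain ⟨u, hu⟩ := hUn
    obtain ⟨x, hx⟩ := nds_surjective f hsurj (le_refl 1) c u
    exact ⟨hU.preimage (nds_continuous f hcont (le_refl 1) c), ⟨x, by simp [Set.mem_preimage, hx, hu]⟩⟩
  obtain ⟨hU₁₀o, hU₁₀n⟩ := hpre U₁ hU₁ hU₁n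
  obtain ⟨hU₂₀o, hU₂₀n⟩ := hpre U₂ hU₂ hU₂n
  obtain ⟨n, hnc, h1, h2⟩ := nds_wm_large hcont hwm
    ((nds f 1 c) ⁻¹' U₁) (Metric.ball v₁ (e₁ / 2)) ((nds f 1 c) ⁻¹' U₂) (Metric.ball v₂ (e₂ / 2))
    hU₁₀o hU₁₀n Metric.isOpen_ball ⟨v₁, by simp [Metric.mem_ball]; linarith⟩
    hU₂₀o hU₂₀n Metric.isOpen_ball ⟨v₂, by simp [Metric.mem_ball]; linarith⟩ c
  set k := n - c with hk
  have hk1 : 1 ≤ k := by omega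
  have hnck : n = c + k := by omega
  have key : ∀ (U : Set X) (v : X) (e : ℝ) (x : X), x ∈ (nds f 1 c) ⁻¹' U →
      nds f 1 n x ∈ Metric.ball v (e / 2) → ε ≤ e / 2 →
      F^[k] (nds f 1 c x) ∈ Metric.ball v e ∧ nds f 1 c x ∈ U := by
    intro U v e x hxU hxb hεe
    refine ⟨?_, hxU⟩
    have hco := hr₀ r (le_max_left _ _) k hk1 (nds f 1 c x)
    rw [hnck, nds_add, h1c] at hxb
    rw [Metric.mem_ball] at hxb ⊢
    simp only [Function.comp_apply] at hxb
    have htri := dist_triangle (F^[k] (nds f 1 c x)) (nds f r k (nds f 1 c x)) v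
    rw [dist_comm] at hco
    linarith
  obtain ⟨z₁, hz₁U, hz₁b⟩ := h1
  obtain ⟨x₁, hx₁U, rfl⟩ := hz₁U
  obtain ⟨z₂, hz₂U, hz₂b⟩ := h2
  obtain ⟨x₂, hx₂U, rfl⟩ := hz₂U
  obtain ⟨hb₁, hm₁⟩ := key U₁ v₁ e₁ x₁ hx₁U hz₁b (min_le_left _ _)
  obtain ⟨hb₂, hm₂⟩ := key U₂ v₂ e₂ x₂ hx₂U hz₂b (min_le_right _ _)
  exact ⟨k, by omega, ⟨F^[k] (nds f 1 c x₁), ⟨nds f 1 c x₁, hm₁, rfl⟩, hball₁ hb₁⟩,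
    ⟨F^[k] (nds f 1 c x₂), ⟨nds f 1 c x₂, hm₂, rfl⟩, hball₂ hb₂⟩⟩

lemma F_syndeticTransitive {f : ℕ → X → X} {F : X → X}
    (hcont : ∀ n : ℕ, 1 ≤ n → Continuous (f n))
    (hsurj : ∀ n : ℕ, 1 ≤ n → Function.Surjective (f n))
    (hcoll : CollectivelyConverges f F) (hsynd : NDSSyndeticallyTransitive f) :
    MapSyndeticallyTransitive F := by
  intro U V hU hUn hV hVn
  obtain ⟨v, hv⟩ := hVn
  obtain ⟨e, he, hball⟩ := Metric.isOpen_iff.1 hV v hv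
  have hεpos : 0 < e / 2 := by linarith
  obtain ⟨r₀, hr₀⟩ := hcoll (e / 2) hεpos
  set r := max r₀ 1 with hr
  have hr1 : 1 ≤ r := le_max_right _ _
  set c := r - 1 with hc
  have h1c : 1 + c = r := by omega
  obtain ⟨u, hu⟩ := hUn
  obtain ⟨x₀, hx₀⟩ := nds_surjective f hsurj (le_refl 1) c u
  obtain ⟨M, hM⟩ := hsynd ((nds f 1 c) ⁻¹' U) (Metric.ball v (e / 2))
    (hU.preimage (nds_continuous f hcont (le_refl 1) c)) ⟨x₀, by simp [Set.mem_preimage, hx₀, hu]⟩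
    Metric.isOpen_ball ⟨v, by simp [Metric.mem_ball]; linarith⟩
  refine ⟨M, fun i hi => ?_⟩
  obtain ⟨j, hj, hij, hji⟩ := hM (i + c) (by omega)
  obtain ⟨hj0, z, hzU, hzb⟩ := hj
  obtain ⟨x, hxU, rfl⟩ := hzU
  set k := j - c with hk
  have hk1 : i ≤ k := by omega
  have hjck : j = c + k := by omega
  refine ⟨k, ⟨by omega, ?_⟩, hk1, by omega⟩
  rw [hjck, nds_add, h1c] at hzb
  simp only [Function.comp_apply] at hzb
  have hco := hr₀ r (le_max_left _ _) k (by omega) (nds f 1 c x)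
  refine ⟨F^[k] (nds f 1 c x), ⟨nds f 1 c x, hxU, rfl⟩, hball ?_⟩
  rw [Metric.mem_ball] at hzb ⊢
  have htri := dist_triangle (F^[k] (nds f 1 c x)) (nds f r k (nds f 1 c x)) v
  rw [dist_comm] at hco
  linarith

end AuxF

theorem syndeticTransitive_weaklyMixing_implies_multiTransitive {X : Type*} [MetricSpace X]
    [CompactSpace X]
    (f : ℕ → X → X) (F : X → X)
    (hcont : ∀ n : ℕ, 1 ≤ n → Continuous (f n))
    (hfo : FeebleOpen f)
    (hsurj : ∀ n : ℕ, 1 ≤ n → Function.Surjective (f n))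
    (hF : Continuous F)
    (hunif : TendstoUniformly (fun n x => f n x) F Filter.atTop)
    (hcoll : CollectivelyConverges f F)
    (hsynd : NDSSyndeticallyTransitive f) (hwm : NDSWeaklyMixing f) :
    NDSMultiTransitive f := by
  have hFsurj : Function.Surjective F := F_surjective hsurj hF hcoll
  have hFwm : MapWeaklyMixing F := F_weaklyMixing hcont hsurj hcoll hwm
  have hFsyn : MapSyndeticallyTransitive F := F_syndeticTransitive hcont hsurj hcoll hsynd
  intro m hm U V hUo hUn hVo hVn
  have hchoice : ∀ j : Fin m, ∃ v : X, ∃ e : ℝ, 0 < e ∧ v ∈ V j ∧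
      Metric.ball v (2 * e) ⊆ V j := by
    intro j
    obtain ⟨v, hv⟩ := hVn j
    obtain ⟨e, he, hball⟩ := Metric.isOpen_iff.1 (hVo j) v hv
    refine ⟨v, e / 2, by linarith, hv, ?_⟩
    have : 2 * (e / 2) = e := by ring
    rw [this]
    exact hball
  choose v ε hεpos hvV hball using hchoice
  have hFinNe : Nonempty (Fin m) := Fin.pos_iff_nonempty.1 hm
  have hε₀ : ∃ ε₀ : ℝ, 0 < ε₀ ∧ ∀ j, ε₀ ≤ ε j := by
    refine ⟨Finset.univ.inf' (Finset.univ_nonempty) ε, ?_, ?_⟩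
    · rw [Finset.lt_inf'_iff]
      exact fun j _ => hεpos j
    · exact fun j => Finset.inf'_le _ (Finset.mem_univ j)
  obtain ⟨ε₀, hε₀pos, hε₀le⟩ := hε₀
  obtain ⟨r₀, hr₀⟩ := hcoll ε₀ hε₀pos
  set r := max r₀ 1 with hr
  have hr1 : 1 ≤ r := le_max_right _ _
  set c := r - 1 with hc
  have h1c : 1 + c = r := by omega
  have hW : ∀ j, ∃ W : Set X, IsOpen W ∧ W.Nonempty ∧ W ⊆ nds f 1 c '' U j :=
    fun j => feeble_chain f hfo c (U j) (hUo j) (hUn j)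
  choose W hWo hWn hWsub using hW
  have hA : ∀ j : Fin m,
      ThicklySyndetic {n | 0 < n ∧ (F^[n] '' W j ∩ Metric.ball (v j) (ε j)).Nonempty} :=
    fun j => thicklySyndetic_N hF hFsurj hFwm hFsyn (hWo j) (hWn j) Metric.isOpen_ball
      ⟨v j, by simp [Metric.mem_ball, hεpos j]⟩
  set C : Fin m → Set ℕ := fun j =>
    {l | c + 1 ≤ (j.1 + 1) * l ∧ ((j.1 + 1) * l - c) ∈
      {n | 0 < n ∧ (F^[n] '' W j ∩ Metric.ball (v j) (ε j)).Nonempty}} with hC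
  have hCts : ∀ j, ThicklySyndetic (C j) := fun j => (hA j).dilate (j.1 + 1) c (by omega)
  have hCap := ThicklySyndetic.iInter_fin m C hCts
  obtain ⟨M, hM⟩ := hCap 0
  obtain ⟨l, hl, hl1, -⟩ := hM 1 (le_refl 1)
  have hlC : l ∈ ⋂ j, C j := by simpa using hl 0 (le_refl 0)
  refine ⟨l, by omega, fun j => ?_⟩
  have hjC : l ∈ C j := Set.mem_iInter.1 hlC j
  obtain ⟨hlb, hkpos, hne⟩ := hjC
  obtain ⟨z, ⟨y, hyW, rfl⟩, hzB⟩ := hne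
  obtain ⟨x, hxU, hyx⟩ := hWsub j hyW
  set k := (j.1 + 1) * l - c with hk
  have hk1 : 1 ≤ k := hkpos
  have hmulcomm : l * (j.1 + 1) = (j.1 + 1) * l := Nat.mul_comm _ _
  have hsum : l * (j.1 + 1) = c + k := by omega
  refine ⟨nds f 1 (l * (j.1 + 1)) x, ⟨x, hxU, rfl⟩, ?_⟩
  rw [hsum, nds_add, h1c]
  simp only [Function.comp_apply]
  rw [hyx]
  apply hball j
  rw [Metric.mem_ball] at hzB ⊢
  have hco := hr₀ r (le_max_left _ _) k hk1 y
  have htri := dist_triangle (nds f r k y) (F^[k] y) (v j)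
  have hle := hε₀le j
  linarith
end

section
/- Let (X,d) be a compact metric space and let (X, f_{1,∞}) be a non-autonomous discrete system such that (f_n) converges uniformly to a continuous map f : X → X. If f_{1,∞} is syndetically transitive but not minimal, then f_{1,∞} is syndetically sensitive. -/
open Set Filter

section AuxProof

variable {X : Type*} [MetricSpace X] [CompactSpace X]

lemma nds_add' (f : ℕ → X → X) (i m k : ℕ) (x : X) :
    nds f i (m + k) x = nds f (i + m) k (nds f i m x) := by
  induction k with
  | zero => rfl
  | succ k ih =>
    show f (i + (m + k)) (nds f i (m + k) x) = f (i + m + k) (nds f (i + m) k (nds f i m x))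
    rw [ih, Nat.add_assoc]

lemma hconv_of_unif {f : ℕ → X → X} {F : X → X}
    (hunif : TendstoUniformly (fun n x => f n x) F Filter.atTop)
    {ε : ℝ} (hε : 0 < ε) : ∃ N : ℕ, ∀ n ≥ N, ∀ x : X, dist (F x) (f n x) < ε := by
  have := Metric.tendstoUniformly_iff.mp hunif ε hε
  rcases Filter.eventually_atTop.mp this with ⟨N, hN⟩
  exact ⟨N, fun n hn x => hN n hn x⟩

lemma uc_iter (F : X → X) (hF : Continuous F) (M : ℕ) {ε : ℝ} (hε : 0 < ε) :
    ∃ η > 0, ∀ j ≤ M, ∀ a b : X, dist a b < η → dist (F^[j] a) (F^[j] b) < ε := by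
  induction M with
  | zero =>
    refine ⟨ε, hε, fun j hj a b h => ?_⟩
    obtain rfl := Nat.le_zero.mp hj
    simpa using h
  | succ M ih =>
    obtain ⟨η, hη, hη'⟩ := ih
    have hcF : UniformContinuous (F^[M + 1]) :=
      CompactSpace.uniformContinuous_of_continuous (hF.iterate _)
    obtain ⟨η₂, hη₂, hη₂'⟩ := Metric.uniformContinuous_iff.mp hcF ε hε
    refine ⟨min η η₂, lt_min hη hη₂, fun j hj a b h => ?_⟩
    by_cases hjM : j ≤ M
    · exact hη' j hjM a b (lt_of_lt_of_le h (min_le_left _ _))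
    · have : j = M + 1 := by omega
      subst this
      exact hη₂' (lt_of_lt_of_le h (min_le_right _ _))

lemma conv_pack (f : ℕ → X → X) (F : X → X) (hF : Continuous F)
    (hunif : TendstoUniformly (fun n x => f n x) F Filter.atTop)
    (M : ℕ) {ε : ℝ} (hε : 0 < ε) :
    ∃ r₀ : ℕ, ∀ j ≤ M, ∀ r ≥ r₀, ∀ x : X, dist (nds f r j x) (F^[j] x) < ε := by
  revert ε
  induction M with
  | zero =>
    intro ε hε
    refine ⟨0, fun j hj r _ x => ?_⟩
    obtain rfl := Nat.le_zero.mp hj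
    simpa [nds] using hε
  | succ M ih =>
    intro ε hε
    have hε2 : (0:ℝ) < ε / 2 := by linarith
    obtain ⟨η, hηpos, hη⟩ := uc_iter (X := X) F hF 1 hε2
    have hη1 : ∀ a b : X, dist a b < η → dist (F a) (F b) < ε / 2 := by
      intro a b h
      simpa using hη 1 le_rfl a b h
    have hmin : (0:ℝ) < min ε η := lt_min hε hηpos
    obtain ⟨r₁, hr₁⟩ := ih hmin
    obtain ⟨r₂, hr₂⟩ := hconv_of_unif hunif hε2
    refine ⟨max r₁ r₂, fun j hj r hr x => ?_⟩
    by_cases hjM : j ≤ M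
    · exact lt_of_lt_of_le (hr₁ j hjM r (le_trans (le_max_left _ _) hr) x) (min_le_left _ _)
    · have : j = M + 1 := by omega
      subst this
      have ha : dist (nds f r M x) (F^[M] x) < min ε η :=
        hr₁ M le_rfl r (le_trans (le_max_left _ _) hr) x
      have h1 : dist (f (r + M) (nds f r M x)) (F (nds f r M x)) < ε / 2 := by
        rw [dist_comm]
        exact hr₂ (r + M) (le_trans (le_trans (le_max_right _ _) hr) (Nat.le_add_right _ _)) _
      have h2 : dist (F (nds f r M x)) (F (F^[M] x)) < ε / 2 :=
        hη1 _ _ (lt_of_lt_of_le ha (min_le_right _ _))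
      have : nds f r (M + 1) x = f (r + M) (nds f r M x) := rfl
      rw [this, Function.iterate_succ_apply']
      calc dist (f (r + M) (nds f r M x)) (F (F^[M] x))
          ≤ dist (f (r + M) (nds f r M x)) (F (nds f r M x))
            + dist (F (nds f r M x)) (F (F^[M] x)) := dist_triangle _ _ _
        _ < ε / 2 + ε / 2 := by linarith
        _ = ε := by ring

lemma shadow_pack (f : ℕ → X → X) (F : X → X) (hF : Continuous F)
    (hunif : TendstoUniformly (fun n x => f n x) F Filter.atTop)
    (x₀ : X) (M : ℕ) {ε : ℝ} (hε : 0 < ε) :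
    ∃ n₀ : ℕ, ∀ j ≤ M, ∀ n ≥ n₀,
      dist (F^[j] (nds f 1 n x₀)) (nds f 1 (n + j) x₀) < ε := by
  revert ε
  induction M with
  | zero =>
    intro ε hε
    refine ⟨0, fun j hj n _ => ?_⟩
    obtain rfl := Nat.le_zero.mp hj
    simpa using hε
  | succ M ih =>
    intro ε hε
    have hε2 : (0:ℝ) < ε / 2 := by linarith
    obtain ⟨η, hηpos, hη⟩ := uc_iter (X := X) F hF 1 hε2
    have hη1 : ∀ a b : X, dist a b < η → dist (F a) (F b) < ε / 2 := by
      intro a b h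
      simpa using hη 1 le_rfl a b h
    have hmin : (0:ℝ) < min ε η := lt_min hε hηpos
    obtain ⟨n₁, hn₁⟩ := ih hmin
    obtain ⟨n₂, hn₂⟩ := hconv_of_unif hunif hε2
    refine ⟨max n₁ n₂, fun j hj n hn => ?_⟩
    by_cases hjM : j ≤ M
    · exact lt_of_lt_of_le (hn₁ j hjM n (le_trans (le_max_left _ _) hn)) (min_le_left _ _)
    · have : j = M + 1 := by omega
      subst this
      have ha : dist (F^[M] (nds f 1 n x₀)) (nds f 1 (n + M) x₀) < min ε η :=
        hn₁ M le_rfl n (le_trans (le_max_left _ _) hn)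
      have h1 : dist (F (F^[M] (nds f 1 n x₀))) (F (nds f 1 (n + M) x₀)) < ε / 2 :=
        hη1 _ _ (lt_of_lt_of_le ha (min_le_right _ _))
      have h2 : dist (F (nds f 1 (n + M) x₀)) (f (1 + (n + M)) (nds f 1 (n + M) x₀)) < ε / 2 :=
        hn₂ (1 + (n + M))
          (by have := le_trans (le_max_right n₁ n₂) hn; omega) _
      have heq : nds f 1 (n + (M + 1)) x₀ = f (1 + (n + M)) (nds f 1 (n + M) x₀) := rfl
      rw [Function.iterate_succ_apply', heq]
      calc dist (F (F^[M] (nds f 1 n x₀))) (f (1 + (n + M)) (nds f 1 (n + M) x₀))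
          ≤ dist (F (F^[M] (nds f 1 n x₀))) (F (nds f 1 (n + M) x₀))
            + dist (F (nds f 1 (n + M) x₀)) (f (1 + (n + M)) (nds f 1 (n + M) x₀)) :=
            dist_triangle _ _ _
        _ < ε / 2 + ε / 2 := by linarith
        _ = ε := by ring

end AuxProof

theorem syndeticallyTransitive_notMinimal_implies_syndeticallySensitive {X : Type*}
    [MetricSpace X] [CompactSpace X]
    (f : ℕ → X → X) (F : X → X)
    (hcont : ∀ n : ℕ, 1 ≤ n → Continuous (f n))
    (hF : Continuous F)
    (hunif : TendstoUniformly (fun n x => f n x) F Filter.atTop)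
    (hsynd : NDSSyndeticallyTransitive f) (hnotmin : ¬NDSMinimal f) :
    NDSSyndeticallySensitive f := by
  obtain ⟨x₀, hx₀⟩ := not_forall.mp hnotmin
  rw [Metric.dense_iff] at hx₀
  push_neg at hx₀
  obtain ⟨v, ρ, hρ, hball⟩ := hx₀
  have hfar : ∀ n : ℕ, ρ ≤ dist (nds f 1 n x₀) v := by
    intro n
    by_contra h
    push_neg at h
    have hmem : nds f 1 n x₀ ∈ Metric.ball v ρ ∩ Set.range fun k => nds f 1 k x₀ :=
      ⟨Metric.mem_ball.mpr h, n, rfl⟩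
    rw [hball] at hmem
    exact hmem
  set δ : ℝ := ρ / 8 with hδdef
  have hδ : 0 < δ := by positivity
  refine ⟨δ, hδ, fun U hU hUne => ?_⟩
  obtain ⟨MA, hA⟩ := hsynd U (Metric.ball v δ) hU hUne Metric.isOpen_ball
    ⟨v, Metric.mem_ball_self hδ⟩
  obtain ⟨η, hηpos, hη⟩ := uc_iter (X := X) F hF MA hδ
  obtain ⟨r₀, hr₀⟩ := conv_pack f F hF hunif MA hδ
  obtain ⟨n₀, hn₀⟩ := shadow_pack f F hF hunif x₀ MA hδ
  obtain ⟨MB, hB⟩ := hsynd U (Metric.ball (nds f 1 n₀ x₀) η) hU hUne Metric.isOpen_ball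
    ⟨_, Metric.mem_ball_self hηpos⟩
  refine ⟨r₀ + MB + MA, fun i hi => ?_⟩
  obtain ⟨n, hnB, hn1, hn2⟩ := hB (i + r₀) (by omega)
  obtain ⟨npos, p, hp⟩ := hnB
  obtain ⟨⟨y, hyU, hyp⟩, hpW⟩ := hp
  obtain ⟨m, hmA, hm1, hm2⟩ := hA n (by omega)
  obtain ⟨mpos, q, hq⟩ := hmA
  obtain ⟨⟨z, hzU, hzq⟩, hqV⟩ := hq
  set j : ℕ := m - n with hjdef
  have hmj : m = n + j := by omega
  have hjM : j ≤ MA := by omega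
  have hr : r₀ ≤ 1 + n := by omega
  have key : nds f 1 m y = nds f (1 + n) j (nds f 1 n y) := by
    rw [hmj, nds_add']
  have h1 : dist (nds f (1 + n) j (nds f 1 n y)) (F^[j] (nds f 1 n y)) < δ :=
    hr₀ j hjM (1 + n) hr _
  have hpη : dist (nds f 1 n y) (nds f 1 n₀ x₀) < η := by
    rw [hyp]
    exact Metric.mem_ball.mp hpW
  have h2 : dist (F^[j] (nds f 1 n y)) (F^[j] (nds f 1 n₀ x₀)) < δ :=
    hη j hjM _ _ hpη
  have h3 : dist (F^[j] (nds f 1 n₀ x₀)) (nds f 1 (n₀ + j) x₀) < δ :=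
    hn₀ j hjM n₀ le_rfl
  have hchain : dist (nds f 1 m y) (nds f 1 (n₀ + j) x₀) < 3 * δ := by
    rw [key]
    calc dist (nds f (1 + n) j (nds f 1 n y)) (nds f 1 (n₀ + j) x₀)
        ≤ dist (nds f (1 + n) j (nds f 1 n y)) (F^[j] (nds f 1 n y))
          + dist (F^[j] (nds f 1 n y)) (F^[j] (nds f 1 n₀ x₀))
          + dist (F^[j] (nds f 1 n₀ x₀)) (nds f 1 (n₀ + j) x₀) := dist_triangle4 _ _ _ _
      _ < 3 * δ := by linarith
  have hfar' : ρ ≤ dist (nds f 1 (n₀ + j) x₀) v := hfar _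
  have hyv : 5 * δ ≤ dist (nds f 1 m y) v := by
    have := dist_triangle (nds f 1 (n₀ + j) x₀) (nds f 1 m y) v
    rw [dist_comm (nds f 1 (n₀ + j) x₀) (nds f 1 m y)] at this
    have h8 : ρ = 8 * δ := by rw [hδdef]; ring
    linarith
  have hzv : dist (nds f 1 m z) v < δ := by
    rw [hzq]
    exact Metric.mem_ball.mp hqV
  have hsep : δ < dist (nds f 1 m y) (nds f 1 m z) := by
    have := dist_triangle (nds f 1 m y) (nds f 1 m z) v
    linarith
  exact ⟨m, ⟨mpos, y, hyU, z, hzU, hsep⟩, by omega, by omega⟩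
end
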